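/- Let H be a normed space, S ⊆ H a subset (the 'residual subalgebra'), and suppose there is a constant K such that d(x, S) ≤ K·φ(x) for all x ∈ H, where φ : H → ℝ≥0. Let ψ : H × H^k → ℝ be uniformly continuous in its first argument with modulus α (i.e. |ψ(x, y) - ψ(x', y)| ≤ α(d(x, x'))) where α is continuous and nondecreasing with α(0) = 0, and suppose φ vanishes on S. Then inf_{x ∈ S} ψ(x, y) = inf_{x ∈ H} ( ψ(x, y) + α(K·φ(x)) ) for every y ∈ H^k, provided S is nonempty. -/
import Mathlib


/-- Quantification Lemma, infimum form: if `S ⊆ H` is nonempty with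
`d(x, S) ≤ K φ(x)`, `φ` vanishes on `S`, and `ψ` is uniformly continuous in its
first argument with modulus `α` (continuous, nondecreasing, `α 0 = 0`), then
`inf_{x ∈ S} ψ(x, y) = inf_{x ∈ H} (ψ(x, y) + α (K φ(x)))`. -/
theorem stmt8 {H : Type*} [MetricSpace H] {k : ℕ}
    (S : Set H) (hS : S.Nonempty) (K : ℝ) (φ : H → ℝ)
    (hφ0 : ∀ x, 0 ≤ φ x) (hφS : ∀ x ∈ S, φ x = 0)
    (hd : ∀ x, Metric.infDist x S ≤ K * φ x)
    (α : ℝ → ℝ) (hαc : Continuous α) (hαm : Monotone α) (hα0 : α 0 = 0)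
    (ψ : H → (Fin k → H) → ℝ)
    (hmod : ∀ x x' y, |ψ x y - ψ x' y| ≤ α (dist x x'))
    (y : Fin k → H) :
    (⨅ x : S, ψ x y) = ⨅ x : H, (ψ x y + α (K * φ x)) := by
  have key : ∀ x : H, ∀ ε > 0, ∃ s ∈ S, ψ s y ≤ ψ x y + α (K * φ x) + ε := by
    intro x ε hε
    obtain ⟨δ, hδ, hδ'⟩ := Metric.continuous_iff.mp hαc (K * φ x) ε hε
    have hlt : Metric.infDist x S < K * φ x + δ := lt_of_le_of_lt (hd x) (by linarith)
    obtain ⟨s, hs, hds⟩ := (Metric.infDist_lt_iff hS).mp hlt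
    refine ⟨s, hs, ?_⟩
    have hmono : α (dist x s) ≤ α (K * φ x) + ε := by
      rcases le_or_gt (dist x s) (K * φ x) with h | h
      · have := hαm h; linarith
      · have : dist (dist x s) (K * φ x) < δ := by
          rw [Real.dist_eq, abs_of_nonneg (by linarith)]; linarith
        have := hδ' _ this
        rw [Real.dist_eq] at this
        have := abs_lt.mp this
        linarith [this.1, this.2]
    have h1 := hmod s x y
    have := (abs_le.mp h1).2
    rw [dist_comm s x] at this
    linarith
  by_cases hb : BddBelow (Set.range fun s : S => ψ s y)
  · have h1 : ∀ x : H, (⨅ s : S, ψ s y) ≤ ψ x y + α (K * φ x) := by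
      intro x
      apply le_of_forall_pos_le_add
      intro ε hε
      obtain ⟨s, hs, h⟩ := key x ε hε
      exact le_trans (ciInf_le hb ⟨s, hs⟩) h
    have hb2 : BddBelow (Set.range fun x : H => ψ x y + α (K * φ x)) := by
      refine ⟨⨅ s : S, ψ s y, ?_⟩
      rintro _ ⟨x, rfl⟩
      exact h1 x
    haveI : Nonempty S := hS.to_subtype
    haveI : Nonempty H := ⟨hS.choose⟩
    apply le_antisymm
    · exact le_ciInf h1
    · apply le_ciInf
      rintro ⟨s, hs⟩
      have h2 := ciInf_le hb2 s
      rwa [hφS s hs, mul_zero, hα0, add_zero] at h2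
  · rw [Real.iInf_of_not_bddBelow hb, Real.iInf_of_not_bddBelow]
    intro h2
    apply hb
    obtain ⟨m, hm⟩ := h2
    refine ⟨m, ?_⟩
    rintro _ ⟨s, rfl⟩
    have h3 := hm ⟨(s : H), rfl⟩
    simp only at h3 ⊢
    rwa [hφS s s.2, mul_zero, hα0, add_zero] at h3
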